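/- Let 𝒜 be an abelian length category with length function ℓ and Gabriel-Roiter measure μ = ℓ*. If X₁ ⊂ X₂ ⊂ ⋯ ⊂ X_n = X is a Gabriel-Roiter filtration of the indecomposable object X (X₁ simple, and each X_{i-1} a Gabriel-Roiter predecessor of X_i, i.e., μ(X_{i-1}) = max over proper indecomposable subobjects Y' ⊂ X_i of μ(Y')), then μ(X) = {ℓ(X_i) | 1 ≤ i ≤ n} as an element of Ch(ℝ). -/
import Mathlib


open CategoryTheory CategoryTheory.Limits

/-- The lexicographic order on finite chains (here: finite subsets of a linear order):
`X ≤ Y` iff `min (Y \ X) ≤ min (X \ Y)`, with the convention `max ∅ < x < min ∅`. -/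
def lexLE {T : Type*} [PartialOrder T] [DecidableEq T] (X Y : Finset T) : Prop :=
  X \ Y = ∅ ∨ ∃ b ∈ Y \ X, ∀ a ∈ X \ Y, b ≤ a

def lexLT {T : Type*} [PartialOrder T] [DecidableEq T] (X Y : Finset T) : Prop :=
  lexLE X Y ∧ ¬ lexLE Y X

universe v u

variable (C : Type u) [Category.{v} C] [Abelian C]

/-- The abelian category is a length category: every object is artinian and noetherian,
i.e. its subobject lattice satisfies both chain conditions (equivalently, every object
has a finite composition series). -/
def IsLengthCategory : Prop :=
  ∀ X : C, WellFoundedLT (Subobject X) ∧ WellFoundedGT (Subobject X)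

variable {C}

/-- `X` is (isomorphic to) a subobject of `Y`. -/
def SubOf (X Y : C) : Prop := ∃ f : X ⟶ Y, Mono f

/-- `X` is a proper subobject of `Y` (strict order on the poset of isoclasses of
indecomposables ordered by the subobject relation). -/
def StrictSubOf (X Y : C) : Prop := SubOf X Y ∧ ¬ SubOf Y X

/-- `X` is indecomposable: nonzero, and any biproduct decomposition has a zero summand. -/
def Indec (X : C) : Prop :=
  ¬ IsZero X ∧ ∀ A B : C, Nonempty (X ≅ A ⊞ B) → IsZero A ∨ IsZero B

/-- A length function on an abelian length category: real-valued, nonnegative, zero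
exactly on zero objects, and additive on short exact sequences. -/
def IsLengthFunctionCat (l : C → ℝ) : Prop :=
  (∀ X : C, 0 ≤ l X) ∧ (∀ X : C, l X = 0 ↔ IsZero X) ∧
  (∀ Sc : ShortComplex C, Sc.ShortExact → l Sc.X₂ = l Sc.X₁ + l Sc.X₃)

/-- `μ` is the Gabriel-Roiter measure `ℓ*` with respect to `l`: for each
indecomposable `X`, `μ X ∈ Ch(ℝ)` is the lexicographic maximum of the sets
`{l X₁, …, l Xₙ}` over all chains `X₁ ⊂ X₂ ⊂ ⋯ ⊂ Xₙ = X` of indecomposable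
subobjects of `X`. -/
def IsGRMeasure (l : C → ℝ) (μ : C → Finset ℝ) : Prop :=
  ∀ X : C, Indec X →
    (∃ (n : ℕ) (Z : Fin (n + 1) → C), (∀ i, Indec (Z i)) ∧
      (∀ i j : Fin (n + 1), i < j → StrictSubOf (Z i) (Z j)) ∧ Z (Fin.last n) = X ∧
      μ X = Finset.univ.image fun i => l (Z i)) ∧
    (∀ (n : ℕ) (Z : Fin (n + 1) → C), (∀ i, Indec (Z i)) →
      (∀ i j : Fin (n + 1), i < j → StrictSubOf (Z i) (Z j)) → Z (Fin.last n) = X →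
      lexLE (Finset.univ.image fun i => l (Z i)) (μ X))


section Aux

lemma lexLE_trans {T : Type*} [LinearOrder T] {X Y Z : Finset T}
    (h1 : lexLE X Y) (h2 : lexLE Y Z) : lexLE X Z := by
  classical
  rcases h1 with h1 | ⟨b, hb, hb2⟩
  · have hXY : X ⊆ Y := Finset.sdiff_eq_empty_iff_subset.mp h1
    rcases h2 with h2 | ⟨c, hc, hc2⟩
    · exact Or.inl (Finset.sdiff_eq_empty_iff_subset.mpr
        (hXY.trans (Finset.sdiff_eq_empty_iff_subset.mp h2)))
    · simp only [Finset.mem_sdiff] at hc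
      refine Or.inr ⟨c, Finset.mem_sdiff.mpr ⟨hc.1, fun hcX => hc.2 (hXY hcX)⟩, ?_⟩
      intro a ha
      simp only [Finset.mem_sdiff] at ha
      exact hc2 a (Finset.mem_sdiff.mpr ⟨hXY ha.1, ha.2⟩)
  · simp only [Finset.mem_sdiff] at hb
    rcases h2 with h2 | ⟨c, hc, hc2⟩
    · have hYZ : Y ⊆ Z := Finset.sdiff_eq_empty_iff_subset.mp h2
      refine Or.inr ⟨b, Finset.mem_sdiff.mpr ⟨hYZ hb.1, hb.2⟩, ?_⟩
      intro a ha
      simp only [Finset.mem_sdiff] at ha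
      by_cases haY : a ∈ Y
      · exact absurd (hYZ haY) ha.2
      · exact hb2 a (Finset.mem_sdiff.mpr ⟨ha.1, haY⟩)
    · simp only [Finset.mem_sdiff] at hc
      rcases le_total c b with hcb | hbc
      · refine Or.inr ⟨c, Finset.mem_sdiff.mpr ⟨hc.1, fun hcX => ?_⟩, ?_⟩
        · have : b ≤ c := hb2 c (Finset.mem_sdiff.mpr ⟨hcX, hc.2⟩)
          exact hb.2 (le_antisymm hcb this ▸ hcX)
        · intro a ha
          simp only [Finset.mem_sdiff] at ha
          by_cases haY : a ∈ Y
          · exact hc2 a (Finset.mem_sdiff.mpr ⟨haY, ha.2⟩)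
          · exact hcb.trans (hb2 a (Finset.mem_sdiff.mpr ⟨ha.1, haY⟩))
      · have hbZ : b ∈ Z := by
          by_contra hbZ
          have : c ≤ b := hc2 b (Finset.mem_sdiff.mpr ⟨hb.1, hbZ⟩)
          exact hbZ (le_antisymm hbc this ▸ hc.1)
        refine Or.inr ⟨b, Finset.mem_sdiff.mpr ⟨hbZ, hb.2⟩, ?_⟩
        intro a ha
        simp only [Finset.mem_sdiff] at ha
        by_cases haY : a ∈ Y
        · exact hbc.trans (hc2 a (Finset.mem_sdiff.mpr ⟨haY, ha.2⟩))
        · exact hb2 a (Finset.mem_sdiff.mpr ⟨ha.1, haY⟩)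

lemma lexLE_antisymm {T : Type*} [LinearOrder T] {X Y : Finset T}
    (h1 : lexLE X Y) (h2 : lexLE Y X) : X = Y := by
  classical
  rcases h1 with h1 | ⟨b, hb, hb2⟩
  · rcases h2 with h2 | ⟨c, hc, hc2⟩
    · exact le_antisymm (Finset.sdiff_eq_empty_iff_subset.mp h1)
        (Finset.sdiff_eq_empty_iff_subset.mp h2)
    · exact absurd hc (by simp [h1])
  · rcases h2 with h2 | ⟨c, hc, hc2⟩
    · exact absurd hb (by simp [h2])
    · have h3 : b ≤ c := hb2 c hc
      have h4 : c ≤ b := hc2 b hb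
      simp only [Finset.mem_sdiff] at hb hc
      exact absurd (le_antisymm h3 h4 ▸ hc.1) hb.2

lemma lexLE_insert {T : Type*} [LinearOrder T] {S U : Finset T} {c : T}
    (hS : ∀ s ∈ S, s < c) (hU : ∀ t ∈ U, t < c) (h : lexLE S U) :
    lexLE (insert c S) (insert c U) := by
  classical
  rcases h with h | ⟨b, hb, hb2⟩
  · refine Or.inl (Finset.eq_empty_iff_forall_notMem.mpr fun a ha => ?_)
    simp only [Finset.mem_sdiff, Finset.mem_insert] at ha
    rcases ha.1 with rfl | haS
    · exact ha.2 (Or.inl rfl)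
    · exact (Finset.eq_empty_iff_forall_notMem.mp h a)
        (Finset.mem_sdiff.mpr ⟨haS, fun haU => ha.2 (Or.inr haU)⟩)
  · simp only [Finset.mem_sdiff] at hb
    refine Or.inr ⟨b, Finset.mem_sdiff.mpr ⟨Finset.mem_insert_of_mem hb.1, ?_⟩, ?_⟩
    · simp only [Finset.mem_insert, not_or]
      refine ⟨?_, hb.2⟩
      rintro rfl
      exact lt_irrefl _ (hU _ hb.1)
    · intro a ha
      simp only [Finset.mem_sdiff, Finset.mem_insert, not_or] at ha
      rcases ha.1 with rfl | haS
      · exact absurd rfl ha.2.1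
      · exact hb2 a (Finset.mem_sdiff.mpr ⟨haS, ha.2.2⟩)

lemma image_fin_last {α : Type*} [DecidableEq α] {n : ℕ} (f : Fin (n + 1) → α) :
    (Finset.univ.image f) =
      insert (f (Fin.last n)) (Finset.univ.image fun i : Fin n => f i.castSucc) := by
  ext x
  simp only [Finset.mem_image, Finset.mem_insert, Finset.mem_univ, true_and]
  constructor
  · rintro ⟨i, rfl⟩
    rcases Fin.eq_castSucc_or_eq_last i with ⟨j, rfl⟩ | rfl
    · exact Or.inr ⟨j, rfl⟩
    · exact Or.inl rfl
  · rintro (rfl | ⟨j, rfl⟩)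
    · exact ⟨_, rfl⟩
    · exact ⟨_, rfl⟩

lemma subOf_refl (X : C) : SubOf X X := ⟨𝟙 X, inferInstance⟩

lemma subOf_trans {X Y Z : C} (h1 : SubOf X Y) (h2 : SubOf Y Z) : SubOf X Z := by
  obtain ⟨f, hf⟩ := h1; obtain ⟨g, hg⟩ := h2
  exact ⟨f ≫ g, mono_comp f g⟩

lemma strictSubOf_of_subOf {X Y Z : C} (h1 : SubOf X Y) (h2 : StrictSubOf Y Z) :
    StrictSubOf X Z :=
  ⟨subOf_trans h1 h2.1, fun h => h2.2 (subOf_trans h h1)⟩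

lemma shortExact_cokernel {A B : C} (f : A ⟶ B) [Mono f] :
    (ShortComplex.mk f (cokernel.π f) (cokernel.condition f)).ShortExact :=
  ⟨ShortComplex.exact_of_g_is_cokernel _ (cokernelIsCokernel f)⟩

lemma length_le_of_subOf {l : C → ℝ} (hl : IsLengthFunctionCat l) {A B : C}
    (h : SubOf A B) : l A ≤ l B := by
  obtain ⟨f, hf⟩ := h
  have heq := hl.2.2 _ (shortExact_cokernel f)
  have := hl.1 (cokernel f)
  simp only [ShortComplex.mk] at heq
  linarith

lemma length_lt_of_strictSubOf {l : C → ℝ} (hl : IsLengthFunctionCat l) {A B : C}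
    (h : StrictSubOf A B) : l A < l B := by
  obtain ⟨⟨f, hf⟩, hns⟩ := h
  have heq := hl.2.2 _ (shortExact_cokernel f)
  simp only [ShortComplex.mk] at heq
  rcases lt_or_eq_of_le (hl.1 (cokernel f)) with h0 | h0
  · linarith
  · exfalso
    have hz : IsZero (cokernel f) := (hl.2.1 _).mp h0.symm
    have hepi : Epi f := Abelian.epi_of_cokernel_π_eq_zero f (hz.eq_of_tgt _ _)
    have : IsIso f := isIso_of_mono_of_epi f
    exact hns ⟨inv f, inferInstance⟩

lemma not_strictSubOf_simple {X Y : C} (hX : Simple X) (hY : Indec Y) :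
    ¬ StrictSubOf Y X := by
  rintro ⟨⟨f, hf⟩, hns⟩
  have hfz : f ≠ 0 := fun h => hY.1 (IsZero.of_mono_eq_zero f h)
  have : IsIso f := (Simple.mono_isIso_iff_nonzero f).mpr hfz
  exact hns ⟨inv f, inferInstance⟩

lemma gr_pred_measure (l : C → ℝ) (hl : IsLengthFunctionCat l)
    (μ : C → Finset ℝ) (hμ : IsGRMeasure l μ)
    {X Y : C} (hX : Indec X) (hY : Indec Y) (hYX : StrictSubOf Y X)
    (hpred : ∀ Y', Indec Y' → StrictSubOf Y' X → lexLE (μ Y') (μ Y)) :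
    μ X = insert (l X) (μ Y) := by
  classical
  obtain ⟨⟨m, W, hWind, hWchain, hWlast, hWμ⟩, hYmax⟩ := hμ Y hY
  obtain ⟨⟨n', Z', hZind, hZchain, hZlast, hZμ⟩, hXmax⟩ := hμ X hX
  -- every element of μ Y is < l X
  have hlYX : l Y < l X := length_lt_of_strictSubOf hl hYX
  have hμYlt : ∀ t ∈ μ Y, t < l X := by
    rw [hWμ]
    intro t ht
    simp only [Finset.mem_image, Finset.mem_univ, true_and] at ht
    obtain ⟨i, rfl⟩ := ht
    have hsub : SubOf (W i) Y := by
      rcases eq_or_lt_of_le (Fin.le_last i) with h | h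
      · rw [h, hWlast]; exact subOf_refl Y
      · exact hWlast ▸ (hWchain i (Fin.last m) h).1
    exact lt_of_le_of_lt (length_le_of_subOf hl hsub) hlYX
  -- Claim A : lexLE (insert (l X) (μ Y)) (μ X), via the chain W followed by X
  have claimA : lexLE (insert (l X) (μ Y)) (μ X) := by
    set V : Fin (m + 2) → C := fun i => if h : (i : ℕ) < m + 1 then W ⟨i, h⟩ else X with hV
    have hVlt : ∀ (i : Fin (m + 2)) (h : (i : ℕ) < m + 1), V i = W ⟨i, h⟩ := by
      intro i h; simp only [hV, dif_pos h]
    have hVlast : V (Fin.last (m + 1)) = X := by simp [hV]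
    have hVind : ∀ i, Indec (V i) := by
      intro i
      by_cases h : (i : ℕ) < m + 1
      · rw [hVlt i h]; exact hWind _
      · rw [hV]; simp only [dif_neg h]; exact hX
    have hWX : ∀ (k : Fin (m + 1)), StrictSubOf (W k) X := by
      intro k
      rcases eq_or_lt_of_le (Fin.le_last k) with h | h
      · rw [h, hWlast]; exact hYX
      · exact strictSubOf_of_subOf (hWchain k (Fin.last m) h).1 (hWlast ▸ hYX)
    have hVchain : ∀ i j : Fin (m + 2), i < j → StrictSubOf (V i) (V j) := by
      intro i j hij
      by_cases hj : (j : ℕ) < m + 1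
      · have hi : (i : ℕ) < m + 1 := lt_trans (Fin.lt_iff_val_lt_val.mp hij) hj
        rw [hVlt i hi, hVlt j hj]
        exact hWchain _ _ (Fin.mk_lt_mk.mpr (Fin.lt_iff_val_lt_val.mp hij))
      · have hi : (i : ℕ) < m + 1 := by
          have := Fin.lt_iff_val_lt_val.mp hij
          have := j.isLt
          omega
        have hVj : V j = X := by simp only [hV]; rw [dif_neg hj]
        rw [hVlt i hi, hVj]
        exact hWX _
    have hVlast' : V (Fin.last (m + 1)) = X := hVlast
    have himg : (Finset.univ.image fun i => l (V i)) = insert (l X) (μ Y) := by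
      rw [hWμ]
      ext x
      simp only [Finset.mem_image, Finset.mem_insert, Finset.mem_univ, true_and]
      have hVcs : ∀ k : Fin (m + 1), V k.castSucc = W k := by
        intro k
        rw [hVlt k.castSucc (by simpa using k.isLt)]
        simp
      constructor
      · rintro ⟨i, rfl⟩
        by_cases h : (i : ℕ) < m + 1
        · exact Or.inr ⟨⟨i, h⟩, by rw [hVlt i h]⟩
        · have hVi : V i = X := by simp only [hV]; rw [dif_neg h]
          exact Or.inl (by rw [hVi])
      · rintro (rfl | ⟨j, rfl⟩)
        · exact ⟨Fin.last (m + 1), by rw [hVlast]⟩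
        · exact ⟨j.castSucc, by rw [hVcs j]⟩
    rw [← himg]
    exact hXmax (m + 1) V hVind hVchain hVlast'
  -- Claim B : lexLE (μ X) (insert (l X) (μ Y))
  cases n' with
  | zero =>
    exfalso
    have hZ0 : Z' 0 = X := by rw [← hZlast]; rfl
    have hμX : μ X = {l X} := by
      rw [hZμ]
      ext x
      simp only [Finset.mem_image, Finset.mem_univ, true_and, Finset.mem_singleton]
      constructor
      · rintro ⟨i, rfl⟩
        rw [Fin.eq_zero i, hZ0]
      · rintro rfl; exact ⟨0, by rw [hZ0]⟩
    rw [hμX] at claimA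
    have hlY : l Y ∈ μ Y := by
      rw [hWμ]
      exact Finset.mem_image.mpr ⟨Fin.last m, Finset.mem_univ _, by rw [hWlast]⟩
    rcases claimA with h | ⟨b, hb, hb2⟩
    · have : l Y ∈ insert (l X) (μ Y) \ {l X} := by
        refine Finset.mem_sdiff.mpr ⟨Finset.mem_insert_of_mem hlY, ?_⟩
        simp only [Finset.mem_singleton]
        exact ne_of_lt (hμYlt _ hlY)
      rw [h] at this
      exact absurd this (Finset.notMem_empty _)
    · simp only [Finset.mem_sdiff, Finset.mem_singleton, Finset.mem_insert] at hb
      exact hb.2 (Or.inl hb.1)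
  | succ k =>
    set P : Fin (k + 1) → C := fun i => Z' i.castSucc with hP
    have hPind : ∀ i, Indec (P i) := fun i => hZind _
    have hPchain : ∀ i j : Fin (k + 1), i < j → StrictSubOf (P i) (P j) := by
      intro i j hij
      exact hZchain _ _ (by simpa using hij)
    obtain ⟨-, hVmax⟩ := hμ (P (Fin.last k)) (hPind _)
    have h1 : lexLE (Finset.univ.image fun i => l (P i)) (μ (P (Fin.last k))) :=
      hVmax k P hPind hPchain rfl
    have hPX : StrictSubOf (P (Fin.last k)) X := by
      rw [← hZlast]
      exact hZchain _ _ (Fin.castSucc_lt_last _)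
    have h2 : lexLE (μ (P (Fin.last k))) (μ Y) := hpred _ (hPind _) hPX
    have h3 : lexLE (Finset.univ.image fun i => l (P i)) (μ Y) := lexLE_trans h1 h2
    have hμXeq : μ X = insert (l X) (Finset.univ.image fun i => l (P i)) := by
      rw [hZμ, image_fin_last (fun i => l (Z' i)), hZlast]
    have hSlt : ∀ s ∈ (Finset.univ.image fun i => l (P i)), s < l X := by
      intro s hs
      simp only [Finset.mem_image, Finset.mem_univ, true_and] at hs
      obtain ⟨i, rfl⟩ := hs
      refine length_lt_of_strictSubOf hl ?_
      rw [← hZlast]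
      exact hZchain _ _ (Fin.castSucc_lt_last _)
    have claimB : lexLE (μ X) (insert (l X) (μ Y)) := by
      rw [hμXeq]
      exact lexLE_insert hSlt hμYlt h3
    exact lexLE_antisymm claimB claimA

end Aux

/-- If `X₁ ⊂ X₂ ⊂ ⋯ ⊂ X_{n+1} = X` is a Gabriel-Roiter filtration of `X` (`X₁`
simple, each `Xᵢ` a Gabriel-Roiter predecessor of `Xᵢ₊₁`, i.e. of maximal measure
among proper indecomposable subobjects), then `μ(X) = {ℓ(Xᵢ)}` in `Ch(ℝ)`. -/
theorem gr_filtration_measure {C : Type u} [Category.{v} C] [Abelian C]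
    (hC : IsLengthCategory C) (l : C → ℝ) (hl : IsLengthFunctionCat l)
    (μ : C → Finset ℝ) (hμ : IsGRMeasure l μ)
    (n : ℕ) (Z : Fin (n + 1) → C)
    (hind : ∀ i, Indec (Z i))
    (hchain : ∀ i j : Fin (n + 1), i < j → StrictSubOf (Z i) (Z j))
    (hsimple : Simple (Z 0))
    (hpred : ∀ i : Fin n, ∀ Y' : C, Indec Y' → StrictSubOf Y' (Z i.succ) →
      lexLE (μ Y') (μ (Z i.castSucc))) :
    μ (Z (Fin.last n)) = Finset.univ.image fun i => l (Z i) := by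
  induction n with
  | zero =>
    obtain ⟨⟨n', Z', hZind, hZchain, hZlast, hZμ⟩, -⟩ := hμ (Z (Fin.last 0)) (hind _)
    have h00 : Z (Fin.last 0) = Z 0 := rfl
    cases n' with
    | zero =>
      rw [hZμ]
      have hZ0 : Z' 0 = Z (Fin.last 0) := by rw [← hZlast]; rfl
      congr 1
      funext i
      rw [Fin.eq_zero i, hZ0]
      rfl
    | succ k =>
      exfalso
      have hstrict : StrictSubOf (Z' 0) (Z (Fin.last 0)) := by
        rw [← hZlast]
        exact hZchain 0 (Fin.last (k + 1)) (by simp [Fin.lt_iff_val_lt_val])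
      rw [h00] at hstrict
      exact not_strictSubOf_simple hsimple (hZind 0) hstrict
  | succ n ih =>
    set W : Fin (n + 1) → C := fun i => Z i.castSucc with hW
    have hWind : ∀ i, Indec (W i) := fun i => hind _
    have hWchain : ∀ i j : Fin (n + 1), i < j → StrictSubOf (W i) (W j) :=
      fun i j h => hchain _ _ (by simpa using h)
    have hWsimple : Simple (W 0) := by
      have : (0 : Fin (n + 1)).castSucc = 0 := rfl
      rw [hW]; simpa [this] using hsimple
    have hWpred : ∀ i : Fin n, ∀ Y' : C, Indec Y' → StrictSubOf Y' (W i.succ) →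
        lexLE (μ Y') (μ (W i.castSucc)) := by
      intro i Y' hY' hsub
      have e1 : W i.succ = Z i.castSucc.succ := by
        rw [hW, Fin.succ_castSucc]
      have e2 : W i.castSucc = Z i.castSucc.castSucc := rfl
      rw [e2]
      exact hpred i.castSucc Y' hY' (e1 ▸ hsub)
    have hIH := ih W hWind hWchain hWsimple hWpred
    have hYX : StrictSubOf (W (Fin.last n)) (Z (Fin.last (n + 1))) :=
      hchain _ _ (Fin.castSucc_lt_last _)
    have hpred' : ∀ Y' : C, Indec Y' → StrictSubOf Y' (Z (Fin.last (n + 1))) →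
        lexLE (μ Y') (μ (W (Fin.last n))) := by
      intro Y' hY' hsub
      have e1 : Z (Fin.last n).succ = Z (Fin.last (n + 1)) := by rw [Fin.succ_last]
      exact hpred (Fin.last n) Y' hY' (e1 ▸ hsub)
    have hkey := gr_pred_measure l hl μ hμ (hind _) (hWind _) hYX hpred'
    rw [hkey, hIH, image_fin_last (fun i => l (Z i))]
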